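/- Let b(n) count hyperbinary expansions of n (with b(0)=1) and let s(n) be Stern's diatomic sequence defined by s(0)=0, s(1)=1, s(2n)=s(n), s(2n+1)=s(n)+s(n+1). Then b(n) = s(n+1) for all n ≥ 0. -/

import Mathlib

/-- The integer represented by a word of digits (most significant first). -/
def hval (w : List ℕ) : ℕ := w.foldl (fun a d => 2 * a + d) 0

/-- `w` is a hyperbinary expansion of `n`: digits in {0,1,2}, nonzero leading
digit, representing `n`.  (The empty word is the unique expansion of `0`.) -/
def IsHyp (n : ℕ) (w : List ℕ) : Prop :=
  (∀ d ∈ w, d ≤ 2) ∧ w.head? ≠ some 0 ∧ hval w = n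

/-- `b n`: the number of hyperbinary expansions of `n` (so `b 0 = 1`). -/
noncomputable def hb (n : ℕ) : ℕ := Set.ncard {w : List ℕ | IsHyp n w}

/-- A single rewriting step: `02 → 10` or `12 → 20`, a leading `2` treated as `02`. -/
def Step (u v : List ℕ) : Prop :=
  (∃ x y : List ℕ, u = x ++ [0, 2] ++ y ∧ v = x ++ [1, 0] ++ y) ∨
  (∃ x y : List ℕ, u = x ++ [1, 2] ++ y ∧ v = x ++ [2, 0] ++ y) ∨
  (∃ y : List ℕ, u = 2 :: y ∧ v = 1 :: 0 :: y)

/-- Strict shortlex order: first by length, then lexicographically. -/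
def Shortlex (u v : List ℕ) : Prop :=
  u.length < v.length ∨ (u.length = v.length ∧ List.Lex (· < ·) u v)

/-- Number of maximal blocks of consecutive `2`'s in a word. -/
def blocks2 : List ℕ → ℕ
  | [] => 0
  | d :: rest => blocks2 rest + (if d = 2 ∧ rest.head? ≠ some 2 then 1 else 0)

lemma hval_append_singleton (w : List ℕ) (d : ℕ) :
    hval (w ++ [d]) = 2 * hval w + d := by
  simp [hval, List.foldl_append]

lemma foldl_ge (w : List ℕ) : ∀ a : ℕ, a * 2 ^ w.length ≤ w.foldl (fun a d => 2 * a + d) a := by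
  induction w with
  | nil => intro a; simp
  | cons d rest ih =>
    intro a
    have := ih (2 * a + d)
    simp only [List.foldl_cons, List.length_cons]
    calc a * 2 ^ (rest.length + 1) = (2 * a) * 2 ^ rest.length := by ring
    _ ≤ (2 * a + d) * 2 ^ rest.length := by
        exact Nat.mul_le_mul_right _ (Nat.le_add_right _ _)
    _ ≤ _ := ih _

lemma hval_pos {d : ℕ} (hd : d ≠ 0) (rest : List ℕ) : 0 < hval (d :: rest) := by
  have h2 := foldl_ge rest d
  have h1 : 0 < d * 2 ^ rest.length := by positivity
  simp only [hval, List.foldl_cons]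
  exact Nat.lt_of_lt_of_le h1 (by simpa using h2)

lemma hyp_length {n : ℕ} {w : List ℕ} (h : IsHyp n w) : w.length ≤ n + 1 := by
  obtain ⟨hd2, hhead, hv⟩ := h
  cases w with
  | nil => simp
  | cons d rest =>
    have hd : d ≠ 0 := by intro h0; exact hhead (by simp [h0])
    have h1 : d * 2 ^ rest.length ≤ hval (d :: rest) := by
      simpa [hval] using foldl_ge rest d
    have h2 : 2 ^ rest.length ≤ d * 2 ^ rest.length :=
      Nat.le_mul_of_pos_left _ (Nat.pos_of_ne_zero hd)
    have h3 : rest.length < 2 ^ rest.length := Nat.lt_two_pow_self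
    simp only [List.length_cons]
    omega

lemma hyp_finite (n : ℕ) : {w : List ℕ | IsHyp n w}.Finite := by
  apply Set.Finite.subset ((List.finite_length_le (Fin 3) (n + 1)).image (List.map Fin.val))
  intro w hw
  obtain ⟨hd2, hhead, hv⟩ := hw
  refine ⟨w.map (fun d => (⟨min d 2, by omega⟩ : Fin 3)), ?_, ?_⟩
  · simpa using hyp_length ⟨hd2, hhead, hv⟩
  · rw [List.map_map]
    conv_rhs => rw [← List.map_id w]
    refine List.map_congr_left fun d hd => ?_
    have := hd2 d hd
    simp; omega


lemma hyp_nonempty {n : ℕ} {w : List ℕ} (h : IsHyp n w) (hn : 0 < n) : w ≠ [] := by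
  rintro rfl
  simp [hval, IsHyp] at h
  omega

lemma hyp_append {n d : ℕ} {f : List ℕ} (h : IsHyp n f) (hd : d ≤ 2)
    (hne : d ≠ 0 ∨ f ≠ []) : IsHyp (2 * n + d) (f ++ [d]) := by
  obtain ⟨hd2, hh, hv⟩ := h
  refine ⟨?_, ?_, by rw [hval_append_singleton, hv]⟩
  · intro e he
    rcases List.mem_append.mp he with h1 | h1
    · exact hd2 e h1
    · simp at h1; omega
  · cases f with
    | nil => simp; rcases hne with h1 | h1; · omega
             · simp at h1
    | cons a t => simpa using hh

lemma hyp_head_of_append {a : ℕ} {f : List ℕ} (hh : (f ++ [a]).head? ≠ some 0) :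
    f.head? ≠ some 0 := by
  cases f with
  | nil => simp
  | cons b t => simpa using hh

lemma hyp_digits_of_append {a : ℕ} {f : List ℕ} (hd2 : ∀ d ∈ f ++ [a], d ≤ 2) :
    ∀ d ∈ f, d ≤ 2 := fun d hd => hd2 d (List.mem_append.mpr (Or.inl hd))

lemma hyp_odd (n : ℕ) :
    {w : List ℕ | IsHyp (2 * n + 1) w} = (fun w => w ++ [1]) '' {w : List ℕ | IsHyp n w} := by
  ext w
  constructor
  · intro hw
    have hne : w ≠ [] := hyp_nonempty hw (by omega)
    obtain ⟨hd2, hh, hv⟩ := hw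
    rcases List.eq_nil_or_concat' w with rfl | ⟨f, d, rfl⟩
    · exact absurd rfl hne
    rw [hval_append_singleton] at hv
    have hdle : d ≤ 2 := hd2 d (List.mem_append.mpr (Or.inr (by simp)))
    have hd1 : d = 1 := by omega
    have hf : hval f = n := by omega
    exact ⟨f, ⟨hyp_digits_of_append hd2, hyp_head_of_append hh, hf⟩, by rw [hd1]⟩
  · rintro ⟨f, hf, rfl⟩
    exact hyp_append hf (by norm_num) (Or.inl one_ne_zero)

lemma hyp_even (n : ℕ) :
    {w : List ℕ | IsHyp (2 * n + 2) w} =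
      (fun w => w ++ [0]) '' {w : List ℕ | IsHyp (n + 1) w} ∪
      (fun w => w ++ [2]) '' {w : List ℕ | IsHyp n w} := by
  ext w
  constructor
  · intro hw
    have hne : w ≠ [] := hyp_nonempty hw (by omega)
    obtain ⟨hd2, hh, hv⟩ := hw
    rcases List.eq_nil_or_concat' w with rfl | ⟨f, d, rfl⟩
    · exact absurd rfl hne
    rw [hval_append_singleton] at hv
    have hdle : d ≤ 2 := hd2 d (List.mem_append.mpr (Or.inr (by simp)))
    have hd1 : d = 0 ∨ d = 2 := by omega
    rcases hd1 with rfl | rfl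
    · exact Or.inl ⟨f, ⟨hyp_digits_of_append hd2, hyp_head_of_append hh, by omega⟩, rfl⟩
    · exact Or.inr ⟨f, ⟨hyp_digits_of_append hd2, hyp_head_of_append hh, by omega⟩, rfl⟩
  · rintro (⟨f, hf, rfl⟩ | ⟨f, hf, rfl⟩)
    · have : 2 * (n + 1) + 0 = 2 * n + 2 := by ring
      exact this ▸ hyp_append hf (by norm_num) (Or.inr (hyp_nonempty hf (by omega)))
    · exact hyp_append hf (by norm_num) (Or.inl two_ne_zero)

lemma hb_odd (n : ℕ) : hb (2 * n + 1) = hb n := by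
  rw [hb, hb, hyp_odd, Set.ncard_image_of_injective _ (List.append_left_injective [1])]

lemma hb_even (n : ℕ) : hb (2 * n + 2) = hb (n + 1) + hb n := by
  have hdisj : Disjoint ((fun w => w ++ [0]) '' {w : List ℕ | IsHyp (n + 1) w})
      ((fun w => w ++ [2]) '' {w : List ℕ | IsHyp n w}) := by
    rw [Set.disjoint_left]
    rintro w ⟨u, _, rfl⟩ ⟨v, _, hv⟩
    have := (List.append_inj' hv rfl).2
    simp at this
  rw [hb, hyp_even, Set.ncard_union_eq hdisj ((hyp_finite (n + 1)).image _)
      ((hyp_finite n).image _), hb, hb,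
    Set.ncard_image_of_injective _ (List.append_left_injective [0]),
    Set.ncard_image_of_injective _ (List.append_left_injective [2])]

lemma hb_zero : hb 0 = 1 := by
  have : {w : List ℕ | IsHyp 0 w} = {[]} := by
    ext w
    constructor
    · intro hw
      obtain ⟨hd2, hh, hv⟩ := hw
      cases w with
      | nil => rfl
      | cons d rest =>
        have hd : d ≠ 0 := by intro h0; exact hh (by simp [h0])
        have := hval_pos hd rest
        omega
    · rintro rfl
      exact ⟨by simp, by simp, rfl⟩
  rw [hb, this, Set.ncard_singleton]

theorem stmt4 (s : ℕ → ℕ) (h0 : s 0 = 0) (h1 : s 1 = 1)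
    (heven : ∀ n : ℕ, s (2 * n) = s n)
    (hodd : ∀ n : ℕ, s (2 * n + 1) = s n + s (n + 1)) :
    ∀ n : ℕ, hb n = s (n + 1) := by
  intro n
  induction n using Nat.strong_induction_on with
  | _ n ih =>
    match n with
    | 0 => rw [hb_zero, h1]
    | (m + 1) =>
      rcases Nat.even_or_odd m with ⟨k, hk⟩ | ⟨k, hk⟩
      · have hm : m + 1 = 2 * k + 1 := by omega
        rw [hm, hb_odd, ih k (by omega)]
        have : 2 * k + 1 + 1 = 2 * (k + 1) := by ring
        rw [this, heven]
      · have hm : m + 1 = 2 * k + 2 := by omega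
        rw [hm, hb_even, ih (k + 1) (by omega), ih k (by omega)]
        have : 2 * k + 2 + 1 = 2 * (k + 1) + 1 := by ring
        rw [this, hodd]
        ring
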